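/- (Hodge decomposition) Let V_0, …, V_n be a cochain complex of finite-dimensional real inner product spaces with coboundary maps δ_p, adjoint coboundary operators δ*_p, and Laplacians Δ_p. Then V_p is the internal orthogonal direct sum of the three subspaces Im δ_{p−1}, Ker Δ_p, and Im δ*_{p+1}: these subspaces are pairwise orthogonal and their sum is all of V_p. -/
import Mathlib


open scoped RealInnerProductSpace

/-- **Statement 11 (Hodge decomposition): `V_p` is the internal orthogonal direct sum of `Im δ_{p−1}`, `Ker Δ_p` and `Im δ*_{p+1}`.**

Indexing convention: the Lean space `V (p + 1)` represents the space `V_p` of the complex,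
and `V 0` represents the trivial space `V_{−1}`; spaces with Lean index `≥ n + 2`
represent the trivial spaces `V_q`, `q ≥ n + 1`.  Thus `δ p : V p → V (p+1)` is the
coboundary `δ_{p−1}`, `δs p : V (p+1) → V p` is the adjoint coboundary `δ*_p`, and
`Lap p : V (p+1) → V (p+1)` is the Laplacian `Δ_p = δ_{p−1} ∘ δ*_p + δ*_{p+1} ∘ δ_p`. -/
theorem hodge_decomposition
    (n : ℕ) (V : ℕ → Type*)
    [∀ p, NormedAddCommGroup (V p)] [∀ p, InnerProductSpace ℝ (V p)]
    [∀ p, FiniteDimensional ℝ (V p)]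
    (hbot : Subsingleton (V 0))
    (htop : ∀ p, n + 2 ≤ p → Subsingleton (V p))
    (δ : ∀ p, V p →ₗ[ℝ] V (p + 1))
    (hδδ : ∀ p, (δ (p + 1)) ∘ₗ (δ p) = 0)
    (δs : ∀ p, V (p + 1) →ₗ[ℝ] V p)
    (hadj : ∀ (p : ℕ) (σ : V p) (τ : V (p + 1)), ⟪δ p σ, τ⟫ = ⟪σ, δs p τ⟫)
    (Lap : ∀ p, V (p + 1) →ₗ[ℝ] V (p + 1))
    (hLap : ∀ p, Lap p = (δ p) ∘ₗ (δs p) + (δs (p + 1)) ∘ₗ (δ (p + 1)))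
    :
    ∀ p, (∀ x ∈ LinearMap.range (δ p), ∀ y ∈ LinearMap.ker (Lap p), ⟪x, y⟫ = 0) ∧
      (∀ x ∈ LinearMap.range (δ p), ∀ y ∈ LinearMap.range (δs (p + 1)), ⟪x, y⟫ = 0) ∧
      (∀ x ∈ LinearMap.ker (Lap p), ∀ y ∈ LinearMap.range (δs (p + 1)), ⟪x, y⟫ = 0) ∧
      LinearMap.range (δ p) ⊔ LinearMap.ker (Lap p) ⊔ LinearMap.range (δs (p + 1)) = ⊤ := by
  intro p
  -- The kernel of the Laplacian consists of the harmonic elements.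
  have hharm : ∀ τ : V (p + 1), Lap p τ = 0 → δs p τ = 0 ∧ δ (p + 1) τ = 0 := by
    intro τ h
    have e1 : ⟪Lap p τ, τ⟫ = ⟪δs p τ, δs p τ⟫ + ⟪δ (p + 1) τ, δ (p + 1) τ⟫ := by
      rw [hLap]
      simp only [LinearMap.add_apply, LinearMap.comp_apply, inner_add_left]
      congr 1
      · exact hadj p (δs p τ) τ
      · rw [real_inner_comm]
        exact (hadj (p + 1) τ (δ (p + 1) τ)).symm
    rw [h, inner_zero_left] at e1
    have h1 : (0:ℝ) ≤ ⟪δs p τ, δs p τ⟫ := real_inner_self_nonneg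
    have h2 : (0:ℝ) ≤ ⟪δ (p + 1) τ, δ (p + 1) τ⟫ := real_inner_self_nonneg
    have hz1 : ⟪δs p τ, δs p τ⟫ = 0 := by linarith
    have hz2 : ⟪δ (p + 1) τ, δ (p + 1) τ⟫ = 0 := by linarith
    exact ⟨inner_self_eq_zero.mp hz1, inner_self_eq_zero.mp hz2⟩
  refine ⟨?_, ?_, ?_, ?_⟩
  · rintro x ⟨σ, rfl⟩ y hy
    rw [hadj p σ y, (hharm y hy).1, inner_zero_right]
  · rintro x ⟨σ, rfl⟩ y ⟨τ, rfl⟩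
    rw [← hadj (p + 1) (δ p σ) τ]
    have : δ (p + 1) (δ p σ) = 0 := by
      have := congrFun (congrArg DFunLike.coe (hδδ p)) σ
      simpa using this
    rw [this, inner_zero_left]
  · rintro x hx y ⟨τ, rfl⟩
    rw [← hadj (p + 1) x τ, (hharm x hx).2, inner_zero_left]
  · set K := LinearMap.range (δ p) ⊔ LinearMap.ker (Lap p) ⊔ LinearMap.range (δs (p + 1))
      with hK
    rw [← Submodule.orthogonal_eq_bot_iff]
    rw [Submodule.eq_bot_iff]
    intro x hx
    have hxK : ∀ u ∈ K, ⟪u, x⟫ = 0 := fun u hu => (Submodule.mem_orthogonal K x).mp hx u hu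
    have hδle : LinearMap.range (δ p) ≤ K := le_sup_of_le_left le_sup_left
    have hkle : LinearMap.ker (Lap p) ≤ K := le_sup_of_le_left le_sup_right
    have hδsle : LinearMap.range (δs (p + 1)) ≤ K := le_sup_right
    have h1 : δs p x = 0 := by
      have := hxK (δ p (δs p x)) (hδle ⟨δs p x, rfl⟩)
      rw [hadj p (δs p x) x] at this
      exact inner_self_eq_zero.mp this
    have h2 : δ (p + 1) x = 0 := by
      have := hxK (δs (p + 1) (δ (p + 1) x)) (hδsle ⟨δ (p + 1) x, rfl⟩)
      rw [real_inner_comm, ← hadj (p + 1) x (δ (p + 1) x)] at this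
      exact inner_self_eq_zero.mp this
    have hxker : Lap p x = 0 := by
      rw [hLap]
      simp [LinearMap.add_apply, LinearMap.comp_apply, h1, h2]
    have := hxK x (hkle hxker)
    exact inner_self_eq_zero.mp this
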